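/- There exists a constant C > 0 such that for every integer L ≥ 1: Σ_{x=1}^{L} (x/L)^{x − 1/2} ≤ C. -/

import Mathlib

open scoped BigOperators

/-- There exists a constant `C > 0` such that for every integer `L ≥ 1`,
`∑_{x=1}^{L} (x/L)^(x - 1/2) ≤ C`, where powers are real powers. -/
theorem sum_ratio_rpow_bounded :
    ∃ C : ℝ, 0 < C ∧ ∀ L : ℕ, 1 ≤ L →
      ∑ x ∈ Finset.Icc 1 L, ((x : ℝ) / (L : ℝ)) ^ ((x : ℝ) - 1 / 2) ≤ C := by
  refine ⟨5, by norm_num, fun L hL => ?_⟩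
  set a : ℝ := Real.exp (-(1/2)) with ha
  have ha0 : 0 < a := Real.exp_pos _
  have ha1 : a < 1 := by
    rw [ha, Real.exp_lt_one_iff]; norm_num
  have hL0 : (0:ℝ) < L := by exact_mod_cast hL
  -- pointwise bound
  have key : ∀ x ∈ Finset.Icc 1 L,
      ((x : ℝ) / (L : ℝ)) ^ ((x : ℝ) - 1 / 2) ≤ (1/2:ℝ)^(x-1) + a^(L-x) := by
    intro x hx
    rw [Finset.mem_Icc] at hx
    obtain ⟨hx1, hxL⟩ := hx
    have hx0 : (0:ℝ) < x := by exact_mod_cast hx1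
    by_cases h : 2*x ≤ L
    · have h' : (2:ℝ)*x ≤ L := by exact_mod_cast h
      calc ((x : ℝ) / (L : ℝ)) ^ ((x : ℝ) - 1 / 2)
          ≤ (1/2:ℝ) ^ ((x : ℝ) - 1 / 2) := by
            apply Real.rpow_le_rpow (by positivity)
            · rw [div_le_iff₀ hL0]; linarith
            · have : (1:ℝ) ≤ x := by exact_mod_cast hx1
              linarith
        _ ≤ (1/2:ℝ) ^ ((x : ℝ) - 1) := by
            apply Real.rpow_le_rpow_of_exponent_ge (by norm_num) (by norm_num)
            linarith
        _ = (1/2:ℝ) ^ (x-1) := by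
            rw [show (x:ℝ) - 1 = ((x-1 : ℕ) : ℝ) by push_cast [hx1]; ring,
              Real.rpow_natCast]
        _ ≤ _ := le_add_of_nonneg_right (pow_nonneg ha0.le _)
    · have h2 : (L:ℝ) + 1 ≤ 2*x := by exact_mod_cast (by omega : L + 1 ≤ 2*x)
      have hxL' : (x:ℝ) ≤ L := by exact_mod_cast hxL
      calc ((x : ℝ) / (L : ℝ)) ^ ((x : ℝ) - 1 / 2)
          ≤ ((x : ℝ) / (L : ℝ)) ^ ((L:ℝ)/2) := by
            apply Real.rpow_le_rpow_of_exponent_ge (by positivity)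
            · rw [div_le_one hL0]; exact hxL'
            · linarith
        _ ≤ (Real.exp (-((L:ℝ)-x)/L)) ^ ((L:ℝ)/2) := by
            apply Real.rpow_le_rpow (by positivity) ?_ (by positivity)
            have h3 := Real.add_one_le_exp (-((L:ℝ)-x)/L)
            have heq : (x:ℝ)/L = -((L:ℝ)-x)/L + 1 := by field_simp; ring
            linarith
        _ = Real.exp (-((L:ℝ)-x)/2) := by
            rw [← Real.exp_mul]
            congr 1
            field_simp
        _ = a ^ (L-x) := by
            rw [ha, ← Real.exp_nat_mul]
            congr 1
            push_cast [hxL]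
            ring
        _ ≤ _ := le_add_of_nonneg_left (by positivity)
  have sum1 : ∑ x ∈ Finset.Icc 1 L, (1/2:ℝ)^(x-1) ≤ 2 := by
    have hre : ∑ x ∈ Finset.Icc 1 L, (1/2:ℝ)^(x-1)
        = ∑ i ∈ Finset.range L, (1/2:ℝ)^i := by
      rw [← Finset.Ico_add_one_right_eq_Icc, Finset.sum_Ico_eq_sum_range]
      simp
    rw [hre]
    have := Summable.sum_le_tsum (Finset.range L)
      (fun i _ => by positivity : ∀ i ∉ Finset.range L, (0:ℝ) ≤ (1/2:ℝ)^i)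
      (summable_geometric_of_lt_one (by norm_num) (by norm_num))
    rw [tsum_geometric_of_lt_one (by norm_num) (by norm_num)] at this
    linarith [this]
  have sum2 : ∑ x ∈ Finset.Icc 1 L, a^(L-x) ≤ 3 := by
    have hre : ∑ x ∈ Finset.Icc 1 L, a^(L-x)
        = ∑ i ∈ Finset.range L, a^i := by
      rw [← Finset.Ico_add_one_right_eq_Icc, Finset.sum_Ico_eq_sum_range]
      have : ∀ i, L - (1 + i) = L - 1 - i := fun i => by omega
      simp only [Nat.add_sub_cancel, this]
      exact Finset.sum_range_reflect (fun j => a^j) L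
    rw [hre]
    have hle : ∑ i ∈ Finset.range L, a^i ≤ (1-a)⁻¹ := by
      have := Summable.sum_le_tsum (Finset.range L)
        (fun i _ => by positivity : ∀ i ∉ Finset.range L, (0:ℝ) ≤ a^i)
        (summable_geometric_of_lt_one ha0.le ha1)
      rwa [tsum_geometric_of_lt_one ha0.le ha1] at this
    have hexp : (3:ℝ)/2 ≤ Real.exp (1/2) := by
      have := Real.add_one_le_exp (1/2:ℝ); linarith
    have haa : a ≤ 2/3 := by
      rw [ha, Real.exp_neg]
      rw [inv_le_comm₀ (Real.exp_pos _) (by norm_num)]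
      linarith
    have : (1-a)⁻¹ ≤ 3 := by
      rw [inv_le_comm₀ (by linarith) (by norm_num)]
      linarith
    linarith
  calc ∑ x ∈ Finset.Icc 1 L, ((x : ℝ) / (L : ℝ)) ^ ((x : ℝ) - 1 / 2)
      ≤ ∑ x ∈ Finset.Icc 1 L, ((1/2:ℝ)^(x-1) + a^(L-x)) := Finset.sum_le_sum key
    _ = ∑ x ∈ Finset.Icc 1 L, (1/2:ℝ)^(x-1) + ∑ x ∈ Finset.Icc 1 L, a^(L-x) :=
        Finset.sum_add_distrib
    _ ≤ 2 + 3 := add_le_add sum1 sum2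
    _ = 5 := by norm_num
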